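/- Let E ⊆ ℤⁿ be an elementary set, i.e. a set defined by a finite system of non-strict linear inequalities with rational coefficients together with finitely many congruence conditions (conditions of the form h(x) ∈ ℤ for rational linear functions h). Then the image of E under the coordinate projection ℤⁿ → ℤⁿ⁻¹ (forgetting the last coordinate) is a finite union of elementary subsets of ℤⁿ⁻¹. -/

import Mathlib

/-- A subset of `ℤⁿ` is *elementary* if it is defined by a finite system of non-strict
(possibly inhomogeneous) linear inequalities with rational coefficients together with
finitely many congruence conditions `h(x) ∈ ℤ` for rational affine-linear functions `h`. -/
def IsElementary {n : ℕ} (E : Set (Fin n → ℤ)) : Prop :=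
  ∃ (k m : ℕ) (a : Fin k → (Fin n → ℚ)) (b : Fin k → ℚ)
    (c : Fin m → (Fin n → ℚ)) (d : Fin m → ℚ),
    E = {x : Fin n → ℤ |
      (∀ i : Fin k, 0 ≤ (∑ j, a i j * (x j : ℚ)) + b i) ∧
      (∀ i : Fin m, ∃ z : ℤ, (∑ j, c i j * (x j : ℚ)) + d i = (z : ℚ))}

lemma denom_clear (q : ℚ) (W : ℕ) (h : q.den ∣ W) : ∃ z : ℤ, (W:ℚ) * q = z := by
  obtain ⟨s, hs⟩ := h
  refine ⟨s * q.num, ?_⟩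
  have hd : q * (q.den : ℚ) = q.num := Rat.mul_den_eq_num q
  push_cast [hs]
  rw [mul_comm (q.den : ℚ) (s:ℚ), mul_assoc, mul_comm (q.den:ℚ) q, hd]

lemma clear_affine {n : ℕ} (u : Fin n → ℚ) (r : ℚ) (W : ℕ)
    (hu : ∀ j, (u j).den ∣ W) (hr : r.den ∣ W) (y : Fin n → ℤ) :
    ∃ z : ℤ, (W:ℚ) * ((∑ j, u j * (y j : ℚ)) + r) = z := by
  choose zu hzu using fun j => denom_clear (u j) W (hu j)
  obtain ⟨zr, hzr⟩ := denom_clear r W hr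
  refine ⟨(∑ j, zu j * y j) + zr, ?_⟩
  rw [mul_add, hzr, Finset.mul_sum]
  push_cast
  congr 1
  refine Finset.sum_congr rfl fun j _ => ?_
  rw [← mul_assoc, hzu j]

lemma inv_clear (α : ℚ) (V : ℕ) (hα : α ≠ 0) (h : α.num.natAbs ∣ V) :
    ∃ z : ℤ, (V:ℚ) * α⁻¹ = z := by
  obtain ⟨s, hs⟩ := h
  refine ⟨α.num.sign * s * α.den, ?_⟩
  have hnum : (α.num : ℚ) ≠ 0 := by exact_mod_cast Rat.num_ne_zero.mpr hα
  have hinv : α⁻¹ = (α.den : ℚ) / α.num := by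
    conv_lhs => rw [← Rat.num_div_den α]
    rw [inv_div]
  have hsign : ((α.num.natAbs : ℤ) : ℚ) = (α.num.sign : ℚ) * α.num := by
    have h2 : α.num.sign * α.num = (α.num.natAbs : ℤ) := by
      rcases Int.lt_or_lt_of_ne (Rat.num_ne_zero.mpr hα) with h | h
      · rw [Int.sign_eq_neg_one_of_neg h]; omega
      · rw [Int.sign_eq_one_of_pos h]; omega
    exact_mod_cast h2.symm
  push_cast at hsign
  rw [hinv, hs]
  push_cast
  rw [Nat.cast_natAbs, Int.cast_abs, hsign]
  field_simp

/-- Core quantifier-elimination step, lower-bound case. -/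
lemma coreLB {k m : ℕ} (α A : Fin k → ℚ) (γ C : Fin m → ℚ) (M D : ℕ)
    (hM : 0 < M) (hD : 0 < D)
    (hMγ : ∀ i, ∃ z : ℤ, (M:ℚ) * γ i = z)
    (hDA : ∀ i, α i ≠ 0 → ∃ z : ℤ, (D:ℚ) * (A i / α i) = z)
    (hpos : ∃ i, 0 < α i)
    (h : ∃ t : ℤ, (∀ i, 0 ≤ A i + α i * t) ∧ (∀ i, ∃ z : ℤ, C i + γ i * t = z)) :
    ∃ (i0 : Fin k) (j : Fin (M * D)),
      (∃ z : ℤ, (-(A i0) / α i0 + (j:ℚ)/D) = (z:ℚ)) ∧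
      (∀ i, 0 ≤ A i + α i * (-(A i0) / α i0 + (j:ℚ)/D)) ∧
      (∀ i, ∃ z : ℤ, C i + γ i * (-(A i0) / α i0 + (j:ℚ)/D) = (z:ℚ)) := by
  obtain ⟨t, ht1, ht2⟩ := h
  obtain ⟨ip, hip⟩ := hpos
  have hS : (Finset.univ.filter (fun i => 0 < α i)).Nonempty :=
    ⟨ip, by simp [hip]⟩
  obtain ⟨i0, hi0S, hi0max⟩ :=
    (Finset.univ.filter (fun i => 0 < α i)).exists_max_image (fun i => -(A i) / α i) hS
  have hαi0 : 0 < α i0 := by simpa using hi0S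
  set L : ℚ := -(A i0) / α i0 with hL
  have hMQ : (0:ℚ) < (M:ℚ) := by exact_mod_cast hM
  have hDQ : (0:ℚ) < (D:ℚ) := by exact_mod_cast hD
  have hLt : L ≤ (t:ℚ) := by
    rw [hL, div_le_iff₀ hαi0]
    have := ht1 i0; nlinarith
  set s0 : ℤ := ⌊((t:ℚ) - L) / M⌋ with hs0
  have hs0nn : 0 ≤ s0 := by
    apply Int.floor_nonneg.mpr
    apply div_nonneg (by linarith) hMQ.le
  set t' : ℤ := t - M * s0 with ht'
  have hwin1 : L ≤ (t':ℚ) := by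
    have h1 : (s0:ℚ) ≤ ((t:ℚ) - L) / M := Int.floor_le _
    rw [le_div_iff₀ hMQ] at h1
    push_cast [ht']
    linarith
  have hwin2 : (t':ℚ) < L + M := by
    have h2 : ((t:ℚ) - L) / M < s0 + 1 := Int.lt_floor_add_one _
    rw [div_lt_iff₀ hMQ] at h2
    push_cast [ht']
    linarith
  have ht'le : (t':ℚ) ≤ (t:ℚ) := by
    have hms : (0:ℚ) ≤ (M:ℚ) * (s0:ℚ) :=
      mul_nonneg hMQ.le (by exact_mod_cast hs0nn)
    push_cast [ht']
    linarith
  have ht'1 : ∀ i, 0 ≤ A i + α i * t' := by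
    intro i
    rcases lt_trichotomy (α i) 0 with hneg | hz | hposi
    · have := ht1 i
      nlinarith
    · simp [hz]; have := ht1 i; rw [hz] at this; linarith [this]
    · have hiS : i ∈ Finset.univ.filter (fun i => 0 < α i) := by simp [hposi]
      have hLi : -(A i) / α i ≤ L := hi0max i hiS
      have : -(A i) ≤ α i * t' := by
        calc -(A i) = α i * (-(A i) / α i) := by field_simp
        _ ≤ α i * L := by exact mul_le_mul_of_nonneg_left hLi hposi.le
        _ ≤ α i * t' := mul_le_mul_of_nonneg_left hwin1 hposi.le
      linarith
  have ht'2 : ∀ i, ∃ z : ℤ, C i + γ i * t' = z := by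
    intro i
    obtain ⟨z, hz⟩ := ht2 i
    obtain ⟨w, hw⟩ := hMγ i
    refine ⟨z - w * s0, ?_⟩
    push_cast [ht']
    linear_combination hz - (s0:ℚ) * hw
  obtain ⟨zL, hzL⟩ := hDA i0 hαi0.ne'
  have hDL : (D:ℚ) * L = -(zL:ℚ) := by
    rw [hL, neg_div, mul_neg, hzL]
  set w : ℤ := D * t' + zL with hwdef
  have hwq : (w:ℚ) = D * ((t':ℚ) - L) := by
    push_cast [hwdef]
    rw [mul_sub, hDL]
    ring
  have hw0 : 0 ≤ w := by
    have : (0:ℚ) ≤ (w:ℚ) := by rw [hwq]; nlinarith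
    exact_mod_cast this
  have hwlt : w < M * D := by
    have : (w:ℚ) < (M:ℚ) * D := by rw [hwq]; nlinarith
    exact_mod_cast this
  refine ⟨i0, ⟨w.toNat, by omega⟩, ?_⟩
  have hjq : ((w.toNat : ℕ) : ℚ) = (w:ℚ) := by
    exact_mod_cast congrArg (fun z : ℤ => (z:ℚ)) (Int.toNat_of_nonneg hw0)
  have hT : -(A i0) / α i0 + ((w.toNat : ℕ) : ℚ) / D = (t':ℚ) := by
    rw [hjq, hwq, ← hL]
    field_simp
    ring
  rw [show ((⟨w.toNat, by omega⟩ : Fin (M * D)) : ℚ) = ((w.toNat : ℕ) : ℚ) from rfl]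
  rw [hT]
  exact ⟨⟨t', rfl⟩, ht'1, ht'2⟩

/-- The candidate values used for quantifier elimination. -/
def cval {k : ℕ} (α A : Fin k → ℚ) (M D : ℕ) :
    (Fin k × Fin (M * D)) ⊕ ((Fin k × Fin (M * D)) ⊕ Fin M) → ℚ :=
  Sum.elim (fun p => -(A p.1) / α p.1 + (p.2 : ℚ) / D)
    (Sum.elim (fun p => -(A p.1) / α p.1 - (p.2 : ℚ) / D) (fun j => (j : ℚ)))

lemma pointwise {k m : ℕ} (α A : Fin k → ℚ) (γ C : Fin m → ℚ) (M D : ℕ)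
    (hM : 0 < M) (hD : 0 < D)
    (hMγ : ∀ i, ∃ z : ℤ, (M:ℚ) * γ i = z)
    (hDA : ∀ i, α i ≠ 0 → ∃ z : ℤ, (D:ℚ) * (A i / α i) = z) :
    (∃ t : ℤ, (∀ i, 0 ≤ A i + α i * t) ∧ (∀ i, ∃ z : ℤ, C i + γ i * t = z)) ↔
    (∃ c, (∃ z : ℤ, cval α A M D c = z) ∧
      (∀ i, 0 ≤ A i + α i * cval α A M D c) ∧
      (∀ i, ∃ z : ℤ, C i + γ i * cval α A M D c = z)) := by
  constructor
  · rintro ⟨t, ht1, ht2⟩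
    by_cases hpos : ∃ i, 0 < α i
    · obtain ⟨i0, j, h1, h2, h3⟩ := coreLB α A γ C M D hM hD hMγ hDA hpos ⟨t, ht1, ht2⟩
      exact ⟨Sum.inl (i0, j), h1, h2, h3⟩
    by_cases hneg : ∃ i, α i < 0
    · have hMγ' : ∀ i, ∃ z : ℤ, (M:ℚ) * (-(γ i)) = z := fun i => by
        obtain ⟨z, hz⟩ := hMγ i; exact ⟨-z, by push_cast; linarith⟩
      have hDA' : ∀ i, (-(α i)) ≠ 0 → ∃ z : ℤ, (D:ℚ) * (A i / (-(α i))) = z := fun i hi => by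
        obtain ⟨z, hz⟩ := hDA i (by simpa using hi)
        exact ⟨-z, by rw [div_neg, mul_neg, hz]; push_cast; ring⟩
      have hpos' : ∃ i, 0 < -(α i) := by
        obtain ⟨i, hi⟩ := hneg; exact ⟨i, by linarith⟩
      have hw : ∃ t' : ℤ, (∀ i, 0 ≤ A i + (-(α i)) * t') ∧
          (∀ i, ∃ z : ℤ, C i + (-(γ i)) * t' = z) := by
        refine ⟨-t, fun i => ?_, fun i => ?_⟩
        · have := ht1 i; push_cast; linarith [ht1 i]
        · obtain ⟨z, hz⟩ := ht2 i; exact ⟨z, by push_cast; linarith [hz]⟩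
      obtain ⟨i0, j, h1, h2, h3⟩ :=
        coreLB (fun i => -(α i)) A (fun i => -(γ i)) C M D hM hD hMγ' hDA' hpos' hw
      set s : ℚ := A i0 / α i0 + (j:ℚ)/D with hsdef
      have hs : -(A i0) / -(α i0) + (j:ℚ)/D = s := by rw [hsdef, neg_div_neg_eq]
      rw [hs] at h1 h2 h3
      have hns : -(A i0) / α i0 - (j:ℚ)/D = -s := by rw [hsdef]; ring
      refine ⟨Sum.inr (Sum.inl (i0, j)), ?_, fun i => ?_, fun i => ?_⟩
      · obtain ⟨z, hz⟩ := h1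
        refine ⟨-z, ?_⟩
        show -(A i0) / α i0 - (j:ℚ)/D = _
        rw [hns, hz]; push_cast; ring
      · have h := h2 i
        show 0 ≤ A i + α i * (-(A i0) / α i0 - (j:ℚ)/D)
        rw [hns, show α i * (-s) = -(α i) * s from by ring]
        exact h
      · obtain ⟨z, hz⟩ := h3 i
        refine ⟨z, ?_⟩
        show C i + γ i * (-(A i0) / α i0 - (j:ℚ)/D) = _
        rw [hns, show γ i * (-s) = -(γ i) * s from by ring]
        exact hz
    · have hz0 : ∀ i, α i = 0 := by
        intro i
        rcases lt_trichotomy (α i) 0 with h | h | h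
        · exact absurd ⟨i, h⟩ hneg
        · exact h
        · exact absurd ⟨i, h⟩ hpos
      have hMZ : (0:ℤ) < M := by exact_mod_cast hM
      refine ⟨Sum.inr (Sum.inr ⟨(t % M).toNat, ?_⟩), ?_, fun i => ?_, fun i => ?_⟩
      · have h1 := Int.emod_nonneg t (by omega : (M:ℤ) ≠ 0)
        have h2 := Int.emod_lt_of_pos t hMZ
        omega
      · refine ⟨t % M, ?_⟩
        show (((t % M).toNat : ℕ) : ℚ) = _
        have h1 := Int.emod_nonneg t (by omega : (M:ℤ) ≠ 0)
        exact_mod_cast congrArg (fun z : ℤ => (z:ℚ)) (Int.toNat_of_nonneg h1)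
      · have := ht1 i
        rw [hz0 i] at this ⊢
        simpa using this
      · obtain ⟨z, hz⟩ := ht2 i
        obtain ⟨w, hw⟩ := hMγ i
        refine ⟨z - w * (t / M), ?_⟩
        show C i + γ i * (((t % M).toNat : ℕ) : ℚ) = _
        have h1 := Int.emod_nonneg t (by omega : (M:ℤ) ≠ 0)
        have h2 : (((t % M).toNat : ℕ) : ℚ) = ((t % M : ℤ) : ℚ) := by
          exact_mod_cast congrArg (fun z : ℤ => (z:ℚ)) (Int.toNat_of_nonneg h1)
        rw [h2]
        have h3 : ((t % M : ℤ) : ℚ) = (t:ℚ) - (M:ℚ) * ((t / M : ℤ) : ℚ) := by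
          rw [Int.emod_def]; push_cast; ring
        rw [h3]
        push_cast
        linear_combination hz - ((t / M : ℤ) : ℚ) * hw
  · rintro ⟨c, ⟨z, hz⟩, h2, h3⟩
    exact ⟨z, fun i => hz ▸ h2 i, fun i => hz ▸ h3 i⟩

lemma elem_good {n k m : ℕ} (a : Fin k → Fin n → ℚ) (b : Fin k → ℚ)
    (c : Fin m → Fin n → ℚ) (d : Fin m → ℚ) (α : Fin k → ℚ) (γ : Fin m → ℚ)
    (e : Fin n → ℚ) (f : ℚ) :
    IsElementary {y : Fin n → ℤ |
      (∃ z : ℤ, (∑ j, e j * (y j : ℚ)) + f = z) ∧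
      (∀ i, 0 ≤ ((∑ j, a i j * (y j : ℚ)) + b i) + α i * ((∑ j, e j * (y j : ℚ)) + f)) ∧
      (∀ i, ∃ z : ℤ, ((∑ j, c i j * (y j : ℚ)) + d i) + γ i * ((∑ j, e j * (y j : ℚ)) + f) = z)} := by
  refine ⟨k, m + 1, (fun i j => a i j + α i * e j), (fun i => b i + α i * f),
    Fin.cons e (fun i j => c i j + γ i * e j), Fin.cons f (fun i => d i + γ i * f), ?_⟩
  have key : ∀ (y : Fin n → ℤ) (u : Fin n → ℚ) (r s : ℚ),
      (∑ j, (u j + s * e j) * (y j : ℚ)) + (r + s * f)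
        = ((∑ j, u j * (y j : ℚ)) + r) + s * ((∑ j, e j * (y j : ℚ)) + f) := by
    intro y u r s
    simp only [add_mul, Finset.sum_add_distrib, mul_add, Finset.mul_sum, mul_assoc]
    ring
  ext y
  simp only [Set.mem_setOf_eq, Fin.forall_fin_succ, Fin.cons_zero, Fin.cons_succ]
  constructor
  · rintro ⟨h0, h1, h2⟩
    refine ⟨fun i => ?_, ⟨h0, fun i => ?_⟩⟩
    · rw [key y (a i) (b i) (α i)]; exact h1 i
    · rw [key y (c i) (d i) (γ i)]; exact h2 i
  · rintro ⟨h1, h0, h2⟩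
    refine ⟨h0, fun i => ?_, fun i => ?_⟩
    · rw [← key y (a i) (b i) (α i)]; exact h1 i
    · rw [← key y (c i) (d i) (γ i)]; exact h2 i

lemma affine_neg_div {n : ℕ} (u : Fin n → ℚ) (r q : ℚ) (y : Fin n → ℤ) :
    -((∑ j, u j * (y j : ℚ)) + r) / q = (∑ j, (-(u j) / q) * (y j : ℚ)) + (-r) / q := by
  rw [neg_add, add_div]
  congr 1
  rw [← Finset.sum_neg_distrib, Finset.sum_div]
  refine Finset.sum_congr rfl fun j _ => ?_
  rw [div_mul_eq_mul_div, neg_mul]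

theorem stmt_0 (n : ℕ) (E : Set (Fin (n + 1) → ℤ)) (hE : IsElementary E) :
    ∃ (k : ℕ) (F : Fin k → Set (Fin n → ℤ)),
      (∀ i, IsElementary (F i)) ∧
      (fun x : Fin (n + 1) → ℤ => x ∘ Fin.castSucc) '' E = ⋃ i, F i := by
  obtain ⟨k, m, a, b, c, d, rfl⟩ := hE
  -- uniform denominators
  set W : ℕ := ∏ i : Fin k, ((b i).den * ∏ j : Fin n, (a i (Fin.castSucc j)).den) with hWdef
  set V : ℕ := ∏ i : Fin k, max (a i (Fin.last n)).num.natAbs 1 with hVdef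
  set M : ℕ := ∏ i : Fin m, (c i (Fin.last n)).den with hMdef
  have hM : 0 < M := Finset.prod_pos fun i _ => (c i (Fin.last n)).pos
  have hW : 0 < W := Finset.prod_pos fun i _ =>
    Nat.mul_pos (b i).pos (Finset.prod_pos fun j _ => (a i (Fin.castSucc j)).pos)
  have hV : 0 < V := Finset.prod_pos fun i _ => lt_of_lt_of_le Nat.one_pos (le_max_right _ _)
  have hD : 0 < W * V := Nat.mul_pos hW hV
  have hMγ : ∀ i, ∃ z : ℤ, (M:ℚ) * (c i (Fin.last n)) = z := fun i =>
    denom_clear _ _ (Finset.dvd_prod_of_mem _ (Finset.mem_univ i))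
  have hDA : ∀ (y : Fin n → ℤ) (i : Fin k), a i (Fin.last n) ≠ 0 →
      ∃ z : ℤ, ((W * V : ℕ):ℚ) *
        (((∑ j, a i (Fin.castSucc j) * (y j : ℚ)) + b i) / a i (Fin.last n)) = z := by
    intro y i hi
    have hfac : ((b i).den * ∏ j : Fin n, (a i (Fin.castSucc j)).den) ∣ W :=
      Finset.dvd_prod_of_mem _ (Finset.mem_univ i)
    obtain ⟨zA, hzA⟩ := clear_affine (fun j => a i (Fin.castSucc j)) (b i) W
      (fun j => dvd_trans (Dvd.dvd.mul_left (Finset.dvd_prod_of_mem _ (Finset.mem_univ j)) _) hfac)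
      (dvd_trans (dvd_mul_right _ _) hfac) y
    have hnatabs : (a i (Fin.last n)).num.natAbs ∣ V := by
      have h1 : max (a i (Fin.last n)).num.natAbs 1 = (a i (Fin.last n)).num.natAbs :=
        max_eq_left (Nat.one_le_iff_ne_zero.mpr (Int.natAbs_ne_zero.mpr (Rat.num_ne_zero.mpr hi)))
      exact h1 ▸ Finset.dvd_prod_of_mem _ (Finset.mem_univ i)
    obtain ⟨zV, hzV⟩ := inv_clear (a i (Fin.last n)) V hi hnatabs
    refine ⟨zA * zV, ?_⟩
    rw [div_eq_mul_inv]
    calc ((W * V : ℕ):ℚ) * (((∑ j, a i (Fin.castSucc j) * (y j : ℚ)) + b i) * (a i (Fin.last n))⁻¹)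
        = ((W:ℚ) * ((∑ j, a i (Fin.castSucc j) * (y j : ℚ)) + b i)) * ((V:ℚ) * (a i (Fin.last n))⁻¹) := by
          push_cast; ring
      _ = (zA:ℚ) * (zV:ℚ) := by rw [hzA, hzV]
      _ = ((zA * zV : ℤ):ℚ) := by push_cast; ring
  -- candidate coefficient data
  set ef : ((Fin k × Fin (M * (W * V))) ⊕ ((Fin k × Fin (M * (W * V))) ⊕ Fin M)) →
      ((Fin n → ℚ) × ℚ) := Sum.elim
    (fun p => (fun j' => -(a p.1 (Fin.castSucc j')) / a p.1 (Fin.last n),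
      -(b p.1) / a p.1 (Fin.last n) + (p.2 : ℚ) / (W * V : ℕ)))
    (Sum.elim
      (fun p => (fun j' => -(a p.1 (Fin.castSucc j')) / a p.1 (Fin.last n),
        -(b p.1) / a p.1 (Fin.last n) - (p.2 : ℚ) / (W * V : ℕ)))
      (fun j => (fun _ => 0, (j : ℚ)))) with hefdef
  set G : ((Fin k × Fin (M * (W * V))) ⊕ ((Fin k × Fin (M * (W * V))) ⊕ Fin M)) →
      Set (Fin n → ℤ) := fun cc => {y : Fin n → ℤ |
    (∃ z : ℤ, (∑ j, (ef cc).1 j * (y j : ℚ)) + (ef cc).2 = z) ∧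
    (∀ i, 0 ≤ ((∑ j, a i (Fin.castSucc j) * (y j : ℚ)) + b i) +
      a i (Fin.last n) * ((∑ j, (ef cc).1 j * (y j : ℚ)) + (ef cc).2)) ∧
    (∀ i, ∃ z : ℤ, ((∑ j, c i (Fin.castSucc j) * (y j : ℚ)) + d i) +
      c i (Fin.last n) * ((∑ j, (ef cc).1 j * (y j : ℚ)) + (ef cc).2) = z)} with hGdef
  have hGelem : ∀ cc, IsElementary (G cc) := fun cc =>
    elem_good (fun i j => a i (Fin.castSucc j)) b (fun i j => c i (Fin.castSucc j)) d
      (fun i => a i (Fin.last n)) (fun i => c i (Fin.last n)) (ef cc).1 (ef cc).2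
  -- the candidate values agree with the affine expressions
  have hTval : ∀ cc (y : Fin n → ℤ),
      cval (fun i => a i (Fin.last n))
        (fun i => (∑ j, a i (Fin.castSucc j) * (y j : ℚ)) + b i) M (W * V) cc
      = (∑ j, (ef cc).1 j * (y j : ℚ)) + (ef cc).2 := by
    rintro (⟨i0, j⟩ | ⟨i0, j⟩ | j) y
    · show -((∑ j, a i0 (Fin.castSucc j) * (y j : ℚ)) + b i0) / a i0 (Fin.last n) + (j:ℚ)/(W*V:ℕ)
        = _
      rw [affine_neg_div]
      simp only [hefdef, Sum.elim_inl]
      push_cast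
      ring
    · show -((∑ j, a i0 (Fin.castSucc j) * (y j : ℚ)) + b i0) / a i0 (Fin.last n) - (j:ℚ)/(W*V:ℕ)
        = _
      rw [affine_neg_div]
      simp only [hefdef, Sum.elim_inr, Sum.elim_inl]
      push_cast
      ring
    · show ((j:ℚ)) = _
      simp [hefdef]
  -- image membership
  have himg : ∀ y : Fin n → ℤ,
      (y ∈ (fun x : Fin (n + 1) → ℤ => x ∘ Fin.castSucc) '' {x : Fin (n+1) → ℤ |
        (∀ i, 0 ≤ (∑ j, a i j * (x j : ℚ)) + b i) ∧
        (∀ i, ∃ z : ℤ, (∑ j, c i j * (x j : ℚ)) + d i = (z : ℚ))}) ↔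
      ∃ t : ℤ, (∀ i, 0 ≤ ((∑ j, a i (Fin.castSucc j) * (y j : ℚ)) + b i)
          + a i (Fin.last n) * t) ∧
        (∀ i, ∃ z : ℤ, ((∑ j, c i (Fin.castSucc j) * (y j : ℚ)) + d i)
          + c i (Fin.last n) * t = z) := by
    intro y
    constructor
    · rintro ⟨x, ⟨hx1, hx2⟩, rfl⟩
      refine ⟨x (Fin.last n), fun i => ?_, fun i => ?_⟩
      · have := hx1 i
        rw [Fin.sum_univ_castSucc] at this
        simp only [Function.comp_apply]
        linarith
      · obtain ⟨z, hz⟩ := hx2 i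
        rw [Fin.sum_univ_castSucc] at hz
        refine ⟨z, ?_⟩
        simp only [Function.comp_apply]
        linarith
    · rintro ⟨t, h1, h2⟩
      refine ⟨Fin.snoc y t, ⟨fun i => ?_, fun i => ?_⟩, ?_⟩
      · rw [Fin.sum_univ_castSucc]
        simp only [Fin.snoc_castSucc, Fin.snoc_last]
        have := h1 i
        linarith
      · obtain ⟨z, hz⟩ := h2 i
        refine ⟨z, ?_⟩
        rw [Fin.sum_univ_castSucc]
        simp only [Fin.snoc_castSucc, Fin.snoc_last]
        linarith
      · funext j
        simp only [Function.comp_apply, Fin.snoc_castSucc]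
  -- assemble
  refine ⟨Fintype.card ((Fin k × Fin (M * (W * V))) ⊕ ((Fin k × Fin (M * (W * V))) ⊕ Fin M)),
    fun i => G ((Fintype.equivFin _).symm i), fun i => hGelem _, ?_⟩
  ext y
  rw [himg y]
  simp only [Set.mem_iUnion]
  have hiff := pointwise (fun i => a i (Fin.last n))
    (fun i => (∑ j, a i (Fin.castSucc j) * (y j : ℚ)) + b i)
    (fun i => c i (Fin.last n))
    (fun i => (∑ j, c i (Fin.castSucc j) * (y j : ℚ)) + d i)
    M (W * V) hM hD hMγ (hDA y)
  rw [hiff]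
  constructor
  · rintro ⟨cc, hcc⟩
    refine ⟨Fintype.equivFin _ cc, ?_⟩
    rw [Equiv.symm_apply_apply]
    rw [hTval cc y] at hcc
    exact hcc
  · rintro ⟨i, hi⟩
    refine ⟨(Fintype.equivFin _).symm i, ?_⟩
    rw [hTval _ y]
    exact hi
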